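/- Let F: [0,R) → (0,∞) be differentiable and increasing with F'(r) > 0, and suppose there exist constants 0 < c ≤ C such that c·F'(r)³ ≤ F''(r) ≤ C·F'(r)³ for all r ∈ [0,R), and suppose F'(r) → ∞ as r → R⁻. Then there exist constants 0 < c' ≤ C' such that c'·(R-r)^{-1/2} ≤ F'(r) ≤ C'·(R-r)^{-1/2} for all r ∈ [0,R). -/

import Mathlib

open Set Filter

/-- If `F : [0,R) → (0,∞)` is twice differentiable, strictly increasing with `F' > 0`,
`F'' ≍ (F')³`, and `F'(r) → ∞` as `r → R⁻`, then `F'(r) ≍ (R-r)^{-1/2}` on `[0,R)`. -/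
theorem green_derivative_asymptotics (R : ℝ) (hR : 0 < R) (F F' F'' : ℝ → ℝ)
    (hd1 : ∀ r ∈ Set.Ico (0 : ℝ) R, HasDerivAt F (F' r) r)
    (hd2 : ∀ r ∈ Set.Ico (0 : ℝ) R, HasDerivAt F' (F'' r) r)
    (hFpos : ∀ r ∈ Set.Ico (0 : ℝ) R, 0 < F r)
    (hinc : StrictMonoOn F (Set.Ico (0 : ℝ) R))
    (hF'pos : ∀ r ∈ Set.Ico (0 : ℝ) R, 0 < F' r)
    (c C : ℝ) (hc : 0 < c) (hcC : c ≤ C)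
    (hcmp : ∀ r ∈ Set.Ico (0 : ℝ) R, c * (F' r) ^ 3 ≤ F'' r ∧ F'' r ≤ C * (F' r) ^ 3)
    (hdiv : Filter.Tendsto F' (nhdsWithin R (Set.Iio R)) Filter.atTop) :
    ∃ c' C' : ℝ, 0 < c' ∧ c' ≤ C' ∧ ∀ r ∈ Set.Ico (0 : ℝ) R,
      c' / Real.sqrt (R - r) ≤ F' r ∧ F' r ≤ C' / Real.sqrt (R - r) := by
  have hC : 0 < C := hc.trans_le hcC
  set G : ℝ → ℝ := fun r => (F' r ^ 2)⁻¹ with hGdef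
  have hF'ne : ∀ r ∈ Set.Ico (0:ℝ) R, F' r ≠ 0 := fun r hr => (hF'pos r hr).ne'
  -- derivative of G
  have hGd : ∀ r ∈ Set.Ico (0:ℝ) R, HasDerivAt G (-(2 * F'' r) / F' r ^ 3) r := by
    intro r hr
    have h1 : HasDerivAt (fun s => F' s ^ 2) (2 * F' r ^ 1 * F'' r) r := by
      simpa using (hd2 r hr).fun_pow 2
    have h2 := h1.fun_inv (pow_ne_zero 2 (hF'ne r hr))
    refine h2.congr_deriv ?_
    have := hF'ne r hr
    rw [div_eq_div_iff (pow_ne_zero _ (pow_ne_zero _ this)) (pow_ne_zero _ this)]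
    ring
  -- bounds on the derivative
  have hDlb : ∀ r ∈ Set.Ico (0:ℝ) R, -(2*C) ≤ -(2 * F'' r) / F' r ^ 3 := by
    intro r hr
    have hp : 0 < F' r ^ 3 := pow_pos (hF'pos r hr) 3
    rw [le_div_iff₀ hp]
    nlinarith [(hcmp r hr).2]
  have hDub : ∀ r ∈ Set.Ico (0:ℝ) R, -(2 * F'' r) / F' r ^ 3 ≤ -(2*c) := by
    intro r hr
    have hp : 0 < F' r ^ 3 := pow_pos (hF'pos r hr) 3
    rw [div_le_iff₀ hp]
    nlinarith [(hcmp r hr).1]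
  have hlinD : ∀ (a s : ℝ), HasDerivAt (fun x => a * x) a s := fun a s => by
    simpa using (hasDerivAt_id s).const_mul a
  have convIco : Convex ℝ (Set.Ico (0:ℝ) R) := convex_Ico 0 R
  -- monotonicity of G + 2C·id
  have hKmono : MonotoneOn (fun s => G s + 2*C*s) (Set.Ico (0:ℝ) R) := by
    apply monotoneOn_of_deriv_nonneg convIco
    · intro s hs
      exact ((hGd s hs).add (hlinD (2*C) s)).continuousAt.continuousWithinAt
    · intro s hs
      rw [interior_Ico] at hs
      exact (((hGd s ⟨hs.1.le, hs.2⟩).add (hlinD (2*C) s)).differentiableAt).differentiableWithinAt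
    · intro s hs
      rw [interior_Ico] at hs
      have hs' : s ∈ Set.Ico (0:ℝ) R := ⟨hs.1.le, hs.2⟩
      rw [((hGd s hs').fun_add (hlinD (2*C) s)).deriv]
      linarith [hDlb s hs']
  -- antitonicity of G + 2c·id
  have hLanti : AntitoneOn (fun s => G s + 2*c*s) (Set.Ico (0:ℝ) R) := by
    apply antitoneOn_of_deriv_nonpos convIco
    · intro s hs
      exact ((hGd s hs).add (hlinD (2*c) s)).continuousAt.continuousWithinAt
    · intro s hs
      rw [interior_Ico] at hs
      exact (((hGd s ⟨hs.1.le, hs.2⟩).add (hlinD (2*c) s)).differentiableAt).differentiableWithinAt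
    · intro s hs
      rw [interior_Ico] at hs
      have hs' : s ∈ Set.Ico (0:ℝ) R := ⟨hs.1.le, hs.2⟩
      rw [((hGd s hs').fun_add (hlinD (2*c) s)).deriv]
      linarith [hDub s hs']
  -- G tends to 0 at R⁻
  have hG0 : Tendsto G (nhdsWithin R (Set.Iio R)) (nhds 0) := by
    have h2 : Tendsto (fun s => F' s ^ 2) (nhdsWithin R (Set.Iio R)) atTop :=
      (tendsto_pow_atTop (by norm_num : (2:ℕ) ≠ 0)).comp hdiv
    exact h2.inv_tendsto_atTop
  have hlim : ∀ a : ℝ, Tendsto (fun s => a * s) (nhdsWithin R (Set.Iio R)) (nhds (a * R)) :=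
    fun a => ((continuous_const.mul continuous_id).tendsto R).mono_left nhdsWithin_le_nhds
  -- key two-sided bound on G
  have key : ∀ r ∈ Set.Ico (0:ℝ) R, 2*c*(R-r) ≤ G r ∧ G r ≤ 2*C*(R-r) := by
    intro r hr
    have hmem : Set.Ioo r R ∈ nhdsWithin R (Set.Iio R) :=
      Ioo_mem_nhdsLT_of_mem ⟨hr.2, le_refl R⟩
    constructor
    · have hKlim : Tendsto (fun s => G s + 2*c*s) (nhdsWithin R (Set.Iio R))
          (nhds (0 + 2*c*R)) := hG0.add (hlim (2*c))
      have hev : ∀ᶠ s in nhdsWithin R (Set.Iio R), G s + 2*c*s ≤ G r + 2*c*r := by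
        filter_upwards [hmem] with s hs
        exact hLanti hr ⟨hr.1.trans hs.1.le, hs.2⟩ hs.1.le
      have := le_of_tendsto hKlim hev
      linarith
    · have hKlim : Tendsto (fun s => G s + 2*C*s) (nhdsWithin R (Set.Iio R))
          (nhds (0 + 2*C*R)) := hG0.add (hlim (2*C))
      have hev : ∀ᶠ s in nhdsWithin R (Set.Iio R), G r + 2*C*r ≤ G s + 2*C*s := by
        filter_upwards [hmem] with s hs
        exact hKmono hr ⟨hr.1.trans hs.1.le, hs.2⟩ hs.1.le
      have := ge_of_tendsto hKlim hev
      linarith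
  -- conclusion
  refine ⟨1 / Real.sqrt (2*C), 1 / Real.sqrt (2*c), ?_, ?_, ?_⟩
  · have : 0 < Real.sqrt (2*C) := Real.sqrt_pos.2 (by linarith)
    positivity
  · exact one_div_le_one_div_of_le (Real.sqrt_pos.2 (by linarith))
      (Real.sqrt_le_sqrt (by linarith))
  · intro r hr
    obtain ⟨h1, h2⟩ := key r hr
    have ht : 0 < R - r := sub_pos.2 hr.2
    have hx : 0 < F' r := hF'pos r hr
    have hGr : G r = (F' r ^ 2)⁻¹ := rfl
    rw [hGr] at h1 h2
    constructor
    · have h2' : 1 ≤ 2*C*(R-r) * F' r ^ 2 := by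
        have := mul_le_mul_of_nonneg_right h2 (sq_nonneg (F' r))
        rwa [inv_mul_cancel₀ (by positivity)] at this
      have hsq : (2*C*(R-r))⁻¹ ≤ F' r ^ 2 := by
        rw [inv_eq_one_div, div_le_iff₀ (by positivity)]
        linarith
      have hs := Real.sqrt_le_sqrt hsq
      rw [Real.sqrt_sq hx.le] at hs
      calc 1 / Real.sqrt (2*C) / Real.sqrt (R-r)
          = Real.sqrt ((2*C*(R-r))⁻¹) := by
            rw [Real.sqrt_inv, Real.sqrt_mul (by positivity : (0:ℝ) ≤ 2*C)]
            ring
        _ ≤ F' r := hs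
    · have h1' : F' r ^ 2 ≤ (2*c*(R-r))⁻¹ := by
        have := mul_le_mul_of_nonneg_right h1 (sq_nonneg (F' r))
        rw [inv_mul_cancel₀ (by positivity)] at this
        rw [inv_eq_one_div, le_div_iff₀ (by positivity)]
        linarith
      have hs := Real.sqrt_le_sqrt h1'
      rw [Real.sqrt_sq hx.le] at hs
      calc F' r ≤ Real.sqrt ((2*c*(R-r))⁻¹) := hs
        _ = 1 / Real.sqrt (2*c) / Real.sqrt (R-r) := by
            rw [Real.sqrt_inv, Real.sqrt_mul (by positivity : (0:ℝ) ≤ 2*c)]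
            ring
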